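/- Let X_1,...,X_n be random variables with range [0,b] such that |E[X_t | X_1,...,X_{t-1}] - μ| ≤ C for all t, where 0 < C < μ. Let S_n = X_1 + ... + X_n. Then for all a ≥ 0, P(S_n ≤ n(μ-C) - a) ≤ exp(-2(a/b)²/n). -/

import Mathlib

open MeasureTheory Real


lemma hoeffding_core {p : ℝ} (hp0 : 0 ≤ p) (hp1 : p ≤ 1) (u : ℝ) :
    1 - p + p * Real.exp u ≤ Real.exp (p * u + u ^ 2 / 8) := by
  set D : ℝ → ℝ := fun u => 1 - p + p * Real.exp u with hD
  have Dpos : ∀ u, 0 < D u := by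
    intro u
    rcases eq_or_lt_of_le hp0 with h | h
    · simp [hD, ← h]
    · have := exp_pos u
      have : 0 < p * Real.exp u := mul_pos h (exp_pos u)
      simp only [hD]; nlinarith
  set q : ℝ → ℝ := fun u => p * Real.exp u / D u with hq
  have hD' : ∀ u, HasDerivAt D (p * Real.exp u) u := fun u =>
    ((Real.hasDerivAt_exp u).const_mul p).const_add (1 - p)
  set h : ℝ → ℝ := fun u => p * u + u ^ 2 / 8 - Real.log (D u) with hh
  set h' : ℝ → ℝ := fun u => p + u / 4 - q u with hh'def
  have hq01 : ∀ u, 0 ≤ q u ∧ q u ≤ 1 := by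
    intro u
    constructor
    · exact div_nonneg (mul_nonneg hp0 (exp_pos u).le) (Dpos u).le
    · rw [div_le_one (Dpos u)]; simp only [hD]; nlinarith
  have hh' : ∀ u, HasDerivAt h (h' u) u := by
    intro u
    have h1 : HasDerivAt (fun u : ℝ => Real.log (D u)) (p * Real.exp u / D u) u :=
      (hD' u).log (Dpos u).ne'
    have h2 : HasDerivAt (fun u : ℝ => p * u) p u := by
      simpa using (hasDerivAt_id u).const_mul p
    have h3 : HasDerivAt (fun u : ℝ => u ^ 2 / 8) (u / 4) u := by
      have := (hasDerivAt_pow 2 u).div_const 8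
      exact this.congr_deriv (by norm_num; ring)
    exact (h2.add h3).sub h1
  have hh'' : ∀ u, HasDerivAt h' (1 / 4 - (q u - q u ^ 2)) u := by
    intro u
    have hqd : HasDerivAt q (q u - q u ^ 2) u := by
      have := (((Real.hasDerivAt_exp u).const_mul p)).div (hD' u) (Dpos u).ne'
      refine this.congr_deriv ?_
      have hDu := (Dpos u).ne'
      simp only [hq]
      field_simp
    have h2 : HasDerivAt (fun u : ℝ => p + u / 4) (1 / 4) u := by
      simpa using ((hasDerivAt_id u).div_const 4).const_add p
    exact h2.sub hqd
  have hmono : Monotone h' :=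
    monotone_of_hasDerivAt_nonneg hh'' (by
      intro u
      have := hq01 u
      simp only [Pi.zero_apply]
      nlinarith [sq_nonneg (q u - 1 / 2)])
  have h'0 : h' 0 = 0 := by
    simp only [hh'def, hq, hD]
    rw [Real.exp_zero]
    have : (1 : ℝ) - p + p * 1 = 1 := by ring
    rw [this]
    ring
  have hcont : Continuous h := by
    have : Differentiable ℝ h := fun x => (hh' x).differentiableAt
    exact this.continuous
  have hge : ∀ u, 0 ≤ h u := by
    intro u
    have h0 : h 0 = 0 := by
      simp [hh, hD, Real.exp_zero]
    rcases le_total 0 u with hu | hu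
    · have hm : MonotoneOn h (Set.Ici (0:ℝ)) := by
        apply monotoneOn_of_hasDerivWithinAt_nonneg (convex_Ici 0) hcont.continuousOn
          (f' := h') (fun x _ => (hh' x).hasDerivWithinAt)
        intro x hx
        rw [interior_Ici] at hx
        have := hmono (le_of_lt hx)
        rw [h'0] at this
        linarith [hmono (le_of_lt (Set.mem_Ioi.mp hx))]
      have := hm (Set.self_mem_Ici) (Set.mem_Ici.mpr hu) hu
      linarith [h0 ▸ this]
    · have hm : AntitoneOn h (Set.Iic (0:ℝ)) := by
        apply antitoneOn_of_hasDerivWithinAt_nonpos (convex_Iic 0) hcont.continuousOn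
          (f' := h') (fun x _ => (hh' x).hasDerivWithinAt)
        intro x hx
        rw [interior_Iic] at hx
        have := hmono (le_of_lt (Set.mem_Iio.mp hx))
        rw [h'0] at this
        linarith
      have := hm (Set.mem_Iic.mpr hu) (Set.self_mem_Iic) hu
      linarith [h0 ▸ this]
  have := hge u
  have hlog : Real.log (D u) ≤ p * u + u ^ 2 / 8 := by
    simp only [hh] at this; linarith
  calc D u = Real.exp (Real.log (D u)) := (Real.exp_log (Dpos u)).symm
    _ ≤ Real.exp (p * u + u ^ 2 / 8) := Real.exp_le_exp.mpr hlog


lemma cond_hoeffding {Ω : Type*} [m0 : MeasurableSpace Ω] (ℙ : Measure Ω)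
    [IsProbabilityMeasure ℙ] {m : MeasurableSpace Ω} (hm : m ≤ m0)
    {Y : Ω → ℝ} (hY : Measurable[m0] Y) {b : ℝ} (hb : 0 < b)
    (hr : ∀ ω, Y ω ∈ Set.Icc (0 : ℝ) b) (lam : ℝ) :
    (ℙ[fun ω => Real.exp (lam * Y ω)|m]) ≤ᵐ[ℙ]
      fun ω => Real.exp (lam * (ℙ[Y|m]) ω + lam ^ 2 * b ^ 2 / 8) := by
  have hYint : Integrable Y ℙ := by
    refine (integrable_const b).mono' (hY.aestronglyMeasurable (μ := ℙ)) (ae_of_all _ fun ω => ?_)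
    have := hr ω
    rw [Real.norm_eq_abs, abs_le]
    constructor <;> [linarith [this.1]; exact this.2]
  have hexpint : Integrable (fun ω => Real.exp (lam * Y ω)) ℙ := by
    refine (integrable_const (Real.exp (|lam| * b))).mono'
      ((hY.const_mul lam).exp.aestronglyMeasurable (μ := ℙ)) (ae_of_all _ fun ω => ?_)
    rw [Real.norm_eq_abs, abs_of_pos (exp_pos _)]
    apply Real.exp_le_exp.mpr
    calc lam * Y ω ≤ |lam * Y ω| := le_abs_self _
      _ = |lam| * |Y ω| := abs_mul _ _
      _ ≤ |lam| * b := by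
          apply mul_le_mul_of_nonneg_left _ (abs_nonneg _)
          rw [abs_of_nonneg (hr ω).1]; exact (hr ω).2
  set c : ℝ := (Real.exp (lam * b) - 1) / b with hc
  -- pointwise convexity bound
  have hpt : ∀ ω, Real.exp (lam * Y ω) ≤ 1 + c * Y ω := by
    intro ω
    obtain ⟨h0, h1⟩ := hr ω
    have ht0 : 0 ≤ Y ω / b := div_nonneg h0 hb.le
    have ht1 : Y ω / b ≤ 1 := (div_le_one hb).mpr h1
    have := convexOn_exp.2 (Set.mem_univ (0:ℝ)) (Set.mem_univ (lam * b))
      (by linarith : (0:ℝ) ≤ 1 - Y ω / b) ht0 (by ring)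
    simp only [smul_eq_mul, mul_zero, zero_add, Real.exp_zero, mul_one] at this
    have heq : Y ω / b * (lam * b) = lam * Y ω := by field_simp
    rw [heq] at this
    calc Real.exp (lam * Y ω) ≤ (1 - Y ω / b) + Y ω / b * Real.exp (lam * b) := this
      _ = 1 + c * Y ω := by rw [hc]; field_simp; ring
  have hrhsint : Integrable (fun ω => 1 + c * Y ω) ℙ :=
    (integrable_const 1).add (hYint.const_mul c)
  have hmono := condExp_mono (m := m) hexpint hrhsint (ae_of_all _ hpt)
  -- compute condexp of affine function
  have haff : (ℙ[fun ω => 1 + c * Y ω|m]) =ᵐ[ℙ] fun ω => 1 + c * (ℙ[Y|m]) ω := by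
    have h1 := condExp_add (m := m) (μ := ℙ) (integrable_const (1:ℝ)) (hYint.const_mul c)
    have h2 := condExp_smul (m := m) (μ := ℙ) c Y
    have h3 : ℙ[(fun _ : Ω => (1:ℝ))|m] = fun _ => (1:ℝ) := condExp_const hm 1
    filter_upwards [h1, h2] with ω e1 e2
    simp only [Pi.add_apply] at e1
    calc (ℙ[fun ω => 1 + c * Y ω|m]) ω
        = (ℙ[(fun x : Ω => (1:ℝ)) + fun x => c * Y x|m]) ω := rfl
      _ = (ℙ[fun x : Ω => (1:ℝ)|m]) ω + (ℙ[fun x => c * Y x|m]) ω := e1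
      _ = 1 + (ℙ[c • Y|m]) ω := by rw [h3]; rfl
      _ = 1 + c * (ℙ[Y|m]) ω := by rw [e2]; simp
  -- bounds on conditional expectation of Y
  have hM0 : (0 : Ω → ℝ) ≤ᵐ[ℙ] ℙ[Y|m] :=
    condExp_nonneg (ae_of_all _ fun ω => (hr ω).1)
  have hMb : (ℙ[Y|m]) ≤ᵐ[ℙ] fun _ => b := by
    have := condExp_mono (m := m) hYint (integrable_const b)
      (ae_of_all _ fun ω => (hr ω).2)
    have h3 : ℙ[(fun _ : Ω => b)|m] = fun _ => b := condExp_const hm b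
    filter_upwards [this] with ω e1
    rw [h3] at e1; exact e1
  filter_upwards [hmono, haff, hM0, hMb] with ω e1 e2 e3 e4
  rw [e2] at e1
  set M := (ℙ[Y|m]) ω
  have hp0 : 0 ≤ M / b := div_nonneg e3 hb.le
  have hp1 : M / b ≤ 1 := (div_le_one hb).mpr e4
  have hcore := hoeffding_core hp0 hp1 (lam * b)
  have heq1 : 1 + c * M = 1 - M / b + M / b * Real.exp (lam * b) := by
    rw [hc]; field_simp; ring
  have heq2 : M / b * (lam * b) + (lam * b) ^ 2 / 8 = lam * M + lam ^ 2 * b ^ 2 / 8 := by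
    field_simp
  rw [heq1] at e1
  rw [heq2] at hcore
  linarith

lemma mgf_sum_le {Ω : Type*} [m0 : MeasurableSpace Ω] (ℙ : Measure Ω)
    [IsProbabilityMeasure ℙ] (n : ℕ) (X : Fin n → Ω → ℝ) (b μ C : ℝ) (hb : 0 < b)
    (hmeas : ∀ t, Measurable[m0] (X t)) (hrange : ∀ t ω, X t ω ∈ Set.Icc (0 : ℝ) b)
    (hcond : ∀ t : Fin n, ∀ᵐ ω ∂ℙ,
      μ - C ≤ (ℙ[X t | ⨆ i : {i : Fin n // (i : ℕ) < (t : ℕ)},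
          MeasurableSpace.comap (X i.1) inferInstance]) ω)
    (lam : ℝ) (hlam : lam ≤ 0) :
    ∀ k, k ≤ n →
      ∫ ω, Real.exp (lam * ∑ t ∈ Finset.univ.filter (fun t : Fin n => (t : ℕ) < k), X t ω) ∂ℙ
        ≤ Real.exp (k * (lam * (μ - C) + lam ^ 2 * b ^ 2 / 8)) := by
  intro k
  induction k with
  | zero =>
    intro _
    have : Finset.univ.filter (fun t : Fin n => (t : ℕ) < 0) = ∅ := by
      ext t; simp
    simp [this]
  | succ k ih =>
    intro hk1
    have hk : k < n := hk1
    have ihk := ih (le_of_lt hk)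
    set t0 : Fin n := ⟨k, hk⟩ with ht0
    set F : MeasurableSpace Ω := ⨆ i : {i : Fin n // (i : ℕ) < k},
      MeasurableSpace.comap (X i.1) inferInstance with hF
    have hFle : F ≤ m0 := iSup_le fun i => (hmeas i.1).comap_le
    set Sk : Ω → ℝ := fun ω => ∑ t ∈ Finset.univ.filter (fun t : Fin n => (t : ℕ) < k), X t ω
      with hSk
    set Y : Ω → ℝ := fun ω => Real.exp (lam * Sk ω) with hY
    set Z : Ω → ℝ := fun ω => Real.exp (lam * X t0 ω) with hZ
    have hsplit : Finset.univ.filter (fun t : Fin n => (t : ℕ) < k + 1)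
        = insert t0 (Finset.univ.filter (fun t : Fin n => (t : ℕ) < k)) := by
      ext t
      simp only [Finset.mem_filter, Finset.mem_univ, true_and, Finset.mem_insert]
      constructor
      · intro h
        rcases Nat.lt_succ_iff_lt_or_eq.mp h with h | h
        · exact Or.inr h
        · exact Or.inl (Fin.ext h)
      · rintro (rfl | h)
        · exact Nat.lt_succ_self k
        · exact Nat.lt_succ_of_lt h
    have ht0notmem : t0 ∉ Finset.univ.filter (fun t : Fin n => (t : ℕ) < k) := by
      simp [ht0]
    have hYZ : ∀ ω, Real.exp (lam *
        ∑ t ∈ Finset.univ.filter (fun t : Fin n => (t : ℕ) < k + 1), X t ω) = Y ω * Z ω := by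
      intro ω
      rw [hsplit, Finset.sum_insert ht0notmem]
      rw [show lam * (X t0 ω + Sk ω) = lam * Sk ω + lam * X t0 ω by ring, Real.exp_add]
    -- nonnegativity / bounds
    have hSknn : ∀ ω, 0 ≤ Sk ω := fun ω =>
      Finset.sum_nonneg fun t _ => (hrange t ω).1
    have hexple1 : ∀ {x : ℝ}, x ≤ 0 → Real.exp x ≤ 1 := fun {x} hx => by
      rw [← Real.exp_zero]; exact Real.exp_le_exp.mpr hx
    have hYle1 : ∀ ω, Y ω ≤ 1 := fun ω =>
      hexple1 (mul_nonpos_of_nonpos_of_nonneg hlam (hSknn ω))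
    have hZle1 : ∀ ω, Z ω ≤ 1 := fun ω =>
      hexple1 (mul_nonpos_of_nonpos_of_nonneg hlam (hrange t0 ω).1)
    -- measurability
    have hSkmeas : Measurable[m0] Sk :=
      Finset.measurable_sum _ fun t _ => hmeas t
    have hYmeas : Measurable[m0] Y := (hSkmeas.const_mul lam).exp
    have hZmeas : Measurable[m0] Z := ((hmeas t0).const_mul lam).exp
    have hSkmeasF : Measurable[F] Sk := by
      apply Finset.measurable_sum
      intro t ht
      have hlt : (t : ℕ) < k := (Finset.mem_filter.mp ht).2
      exact Measurable.of_comap_le (le_iSup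
        (fun i : {i : Fin n // (i : ℕ) < k} => MeasurableSpace.comap (X i.1) inferInstance)
        ⟨t, hlt⟩)
    have hYsm : StronglyMeasurable[F] Y :=
      (Real.measurable_exp.comp (hSkmeasF.const_mul lam)).stronglyMeasurable
    -- integrability
    have int_of_le_one : ∀ (f : Ω → ℝ), Measurable[m0] f → (∀ ω, 0 ≤ f ω) → (∀ ω, f ω ≤ 1) →
        Integrable f ℙ := by
      intro f hf h0 h1
      refine (integrable_const (1 : ℝ)).mono' (hf.aestronglyMeasurable (μ := ℙ))
        (ae_of_all _ fun ω => ?_)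
      rw [Real.norm_eq_abs, abs_of_nonneg (h0 ω)]; exact h1 ω
    have hYint : Integrable Y ℙ :=
      int_of_le_one Y hYmeas (fun ω => (exp_pos _).le) hYle1
    have hZint : Integrable Z ℙ :=
      int_of_le_one Z hZmeas (fun ω => (exp_pos _).le) hZle1
    have hYZint : Integrable (Y * Z) ℙ :=
      int_of_le_one (Y * Z) (hYmeas.mul hZmeas)
        (fun ω => mul_nonneg (exp_pos _).le (exp_pos _).le)
        (fun ω => mul_le_one₀ (hYle1 ω) (exp_pos _).le (hZle1 ω))
    -- conditional expectation bound
    set K : ℝ := Real.exp (lam * (μ - C) + lam ^ 2 * b ^ 2 / 8) with hK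
    have hcondbd : (ℙ[Z|F]) ≤ᵐ[ℙ] fun _ => K := by
      have h1 := cond_hoeffding (m0 := m0) ℙ hFle (hmeas t0) hb (hrange t0) lam
      have h2 := hcond t0
      filter_upwards [h1, h2] with ω e1 e2
      refine e1.trans (Real.exp_le_exp.mpr ?_)
      have : lam * (ℙ[X t0|F]) ω ≤ lam * (μ - C) :=
        mul_le_mul_of_nonpos_left e2 hlam
      linarith
    -- the chain of (in)equalities
    have hpull : ℙ[Y * Z|F] =ᵐ[ℙ] Y * ℙ[Z|F] :=
      condExp_mul_of_stronglyMeasurable_left hYsm hYZint hZint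
    calc ∫ ω, Real.exp (lam *
          ∑ t ∈ Finset.univ.filter (fun t : Fin n => (t : ℕ) < k + 1), X t ω) ∂ℙ
        = ∫ ω, (Y * Z) ω ∂ℙ := by
          apply integral_congr_ae; exact ae_of_all _ fun ω => hYZ ω
      _ = ∫ ω, (ℙ[Y * Z|F]) ω ∂ℙ := (integral_condExp hFle).symm
      _ = ∫ ω, (Y * ℙ[Z|F]) ω ∂ℙ := integral_congr_ae hpull
      _ ≤ ∫ ω, Y ω * K ∂ℙ := by
          apply integral_mono_ae
          · exact (integrable_condExp).bdd_mul (c := 1) (hYmeas.aestronglyMeasurable (μ := ℙ))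
              (ae_of_all _ fun ω => by rw [Real.norm_eq_abs, abs_of_pos (exp_pos _)]; exact hYle1 ω)
          · exact hYint.mul_const K
          · filter_upwards [hcondbd] with ω e1
            exact mul_le_mul_of_nonneg_left e1 (exp_pos _).le
      _ = (∫ ω, Y ω ∂ℙ) * K := integral_mul_const K Y
      _ ≤ Real.exp (k * (lam * (μ - C) + lam ^ 2 * b ^ 2 / 8)) * K :=
          mul_le_mul_of_nonneg_right ihk (by rw [hK]; exact (exp_pos _).le)
      _ = Real.exp ((k + 1 : ℕ) * (lam * (μ - C) + lam ^ 2 * b ^ 2 / 8)) := by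
          rw [hK, ← Real.exp_add]
          congr 1
          push_cast
          ring


/-- Generalized Chernoff-Hoeffding bound (lower tail) for random variables
whose conditional means may drift within `C` of `μ`. -/
theorem generalized_chernoff_hoeffding_lower
    {Ω : Type*} [MeasurableSpace Ω] (ℙ : Measure Ω) [IsProbabilityMeasure ℙ]
    (n : ℕ) (X : Fin n → Ω → ℝ) (b μ C : ℝ)
    (hb : 0 < b) (hC : 0 < C) (hCμ : C < μ)
    (hmeas : ∀ t, Measurable (X t))
    (hrange : ∀ t ω, X t ω ∈ Set.Icc (0 : ℝ) b)
    (hcond : ∀ t : Fin n, ∀ᵐ ω ∂ℙ,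
      |(ℙ[X t | ⨆ i : {i : Fin n // (i : ℕ) < (t : ℕ)},
          MeasurableSpace.comap (X i.1) inferInstance]) ω - μ| ≤ C)
    (a : ℝ) (ha : 0 ≤ a) :
    (ℙ {ω | ∑ t, X t ω ≤ (n : ℝ) * (μ - C) - a}).toReal ≤
      Real.exp (-2 * (a / b)^2 / n) := by
  rcases Nat.eq_zero_or_pos n with hn | hn
  · subst hn
    simp only [Nat.cast_zero, div_zero, Real.exp_zero]
    calc (ℙ {ω | ∑ t : Fin 0, X t ω ≤ (0 : ℝ) * (μ - C) - a}).toReal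
        ≤ (ℙ Set.univ).toReal :=
          ENNReal.toReal_mono (measure_ne_top _ _) (measure_mono (Set.subset_univ _))
      _ = 1 := by simp
  · have hnR : (0 : ℝ) < n := by exact_mod_cast hn
    set lam : ℝ := -(4 * a / (n * b ^ 2)) with hlam_def
    have hlam : lam ≤ 0 := by
      rw [hlam_def, neg_nonpos]
      positivity
    have hcond' : ∀ t : Fin n, ∀ᵐ ω ∂ℙ,
        μ - C ≤ (ℙ[X t | ⨆ i : {i : Fin n // (i : ℕ) < (t : ℕ)},
          MeasurableSpace.comap (X i.1) inferInstance]) ω := by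
      intro t
      filter_upwards [hcond t] with ω h
      have := (abs_le.mp h).1
      linarith
    have h_int : Integrable (fun ω => Real.exp (lam * ∑ t, X t ω)) ℙ := by
      refine (integrable_const (1 : ℝ)).mono'
        (((Finset.measurable_sum Finset.univ fun t _ => hmeas t).const_mul
          lam).exp.aestronglyMeasurable (μ := ℙ)) (ae_of_all _ fun ω => ?_)
      rw [Real.norm_eq_abs, abs_of_pos (exp_pos _), ← Real.exp_zero]
      apply Real.exp_le_exp.mpr
      exact mul_nonpos_of_nonpos_of_nonneg hlam
        (Finset.sum_nonneg fun t _ => (hrange t ω).1)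
    have hmarkov := ProbabilityTheory.measure_le_le_exp_mul_mgf
      (μ := ℙ) (X := fun ω => ∑ t, X t ω) ((n : ℝ) * (μ - C) - a) hlam h_int
    have hfull : Finset.univ.filter (fun t : Fin n => (t : ℕ) < n) = Finset.univ := by
      apply Finset.filter_true_of_mem; intro t _; exact t.isLt
    have hmgf : ProbabilityTheory.mgf (fun ω => ∑ t, X t ω) ℙ lam
        ≤ Real.exp (n * (lam * (μ - C) + lam ^ 2 * b ^ 2 / 8)) := by
      have := mgf_sum_le ℙ n X b μ C hb hmeas hrange hcond' lam hlam n le_rfl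
      rw [hfull] at this
      exact this
    refine hmarkov.trans ?_
    have hK : Real.exp (-lam * ((n : ℝ) * (μ - C) - a)) *
        ProbabilityTheory.mgf (fun ω => ∑ t, X t ω) ℙ lam
        ≤ Real.exp (-lam * ((n : ℝ) * (μ - C) - a)) *
          Real.exp (n * (lam * (μ - C) + lam ^ 2 * b ^ 2 / 8)) :=
      mul_le_mul_of_nonneg_left hmgf (exp_pos _).le
    refine hK.trans ?_
    rw [← Real.exp_add]
    apply le_of_eq
    congr 1
    rw [hlam_def]
    have hbne : b ≠ 0 := hb.ne'
    have hnne : (n : ℝ) ≠ 0 := hnR.ne'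
    field_simp
    ring
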